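/- Let ρ, σ ⪰ 0 be positive semidefinite matrices and Π an orthogonal projector commuting with ρ. Then F(ρ,σ) ≤ F(ΠρΠ, σ) + sqrt(Tr[(I-Π)ρ(I-Π)]) · sqrt(Tr[(I-Π)σ(I-Π)]), where F(ρ,σ) = ‖sqrt(ρ) sqrt(σ)‖₁ is the fidelity (trace norm of sqrt(ρ)sqrt(σ)). -/

import Mathlib

open Matrix ComplexOrder

attribute [local instance] Classical.propDecidable

/-- Square root of a positive semidefinite matrix (junk value `0` otherwise). -/
noncomputable def psqrt {d : ℕ} (X : Matrix (Fin d) (Fin d) ℂ) : Matrix (Fin d) (Fin d) ℂ :=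
  if h : X.PosSemidef then
    (h.1.eigenvectorUnitary : Matrix (Fin d) (Fin d) ℂ) *
      diagonal ((↑) ∘ Real.sqrt ∘ h.1.eigenvalues) *
      (star h.1.eigenvectorUnitary : Matrix (Fin d) (Fin d) ℂ)
  else 0

/-- Schatten 1-norm (trace norm): `‖M‖₁ = Tr √(Mᴴ M)`. -/
noncomputable def traceNorm {d : ℕ} (M : Matrix (Fin d) (Fin d) ℂ) : ℝ :=
  (psqrt (Mᴴ * M)).trace.re

/-- Fidelity `F(X, σ) = Tr √(√σ X √σ)` of positive semidefinite matrices. -/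
noncomputable def fid {d : ℕ} (X σ : Matrix (Fin d) (Fin d) ℂ) : ℝ :=
  (psqrt (psqrt σ * X * psqrt σ)).trace.re

variable {d : ℕ}

open scoped MatrixOrder

lemma psqrt_eq {X : Matrix (Fin d) (Fin d) ℂ} (h : X.PosSemidef) : psqrt X = CFC.sqrt X := by
  rw [CFC.sqrt_eq_cfc, cfc_nnreal_eq_real _ X, h.1.cfc_eq, psqrt, dif_pos h]
  simp only [IsHermitian.cfc, Unitary.conjStarAlgAut_apply]
  congr 3
  funext i
  simp [Real.coe_toNNReal', Real.coe_sqrt]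
  rw [max_eq_left (h.eigenvalues_nonneg i)]

lemma psqrt_posSemidef {X : Matrix (Fin d) (Fin d) ℂ} (h : X.PosSemidef) :
    (psqrt X).PosSemidef := by rw [psqrt_eq h]; exact (CFC.sqrt_nonneg X).posSemidef

lemma psqrt_mul_self {X : Matrix (Fin d) (Fin d) ℂ} (h : X.PosSemidef) :
    psqrt X * psqrt X = X := by rw [psqrt_eq h]; exact CFC.sqrt_mul_sqrt_self X h.nonneg

lemma psqrt_herm {X : Matrix (Fin d) (Fin d) ℂ} (h : X.PosSemidef) :
    (psqrt X)ᴴ = psqrt X := (psqrt_posSemidef h).1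

lemma entry_nonneg {X : Matrix (Fin d) (Fin d) ℂ} (h : X.PosSemidef) (i : Fin d) :
    0 ≤ X i i := by
  exact h.diag_nonneg

lemma trace_re_nonneg {X : Matrix (Fin d) (Fin d) ℂ} (h : X.PosSemidef) :
    0 ≤ X.trace.re := by
  rw [Matrix.trace, Complex.re_sum]
  exact Finset.sum_nonneg fun i _ => (Complex.le_def.mp (entry_nonneg h i)).1

lemma trace_conjTranspose_mul (A B : Matrix (Fin d) (Fin d) ℂ) :
    (Aᴴ * B).trace = ∑ p : Fin d × Fin d, (starRingEnd ℂ) (A p.2 p.1) * B p.2 p.1 := by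
  rw [Matrix.trace, Fintype.sum_prod_type]
  simp [Matrix.diag, Matrix.mul_apply, Matrix.conjTranspose_apply]

lemma trace_conjTranspose_mul_self_re (A : Matrix (Fin d) (Fin d) ℂ) :
    (Aᴴ * A).trace.re = ∑ p : Fin d × Fin d, ‖A p.2 p.1‖ ^ 2 := by
  rw [trace_conjTranspose_mul, Complex.re_sum]
  congr 1; ext p
  rw [← Complex.normSq_eq_conj_mul_self]
  simp [Complex.normSq_eq_norm_sq, ← Complex.ofReal_pow]

lemma cauchy_schwarz_trace (A B : Matrix (Fin d) (Fin d) ℂ) :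
    ‖(Aᴴ * B).trace‖ ≤ Real.sqrt ((Aᴴ * A).trace.re) * Real.sqrt ((Bᴴ * B).trace.re) := by
  let x : EuclideanSpace ℂ (Fin d × Fin d) := WithLp.toLp 2 (fun p : Fin d × Fin d => A p.2 p.1)
  let y : EuclideanSpace ℂ (Fin d × Fin d) := WithLp.toLp 2 (fun p : Fin d × Fin d => B p.2 p.1)
  have h1 : (Aᴴ * B).trace = inner ℂ x y := by
    rw [trace_conjTranspose_mul]
    simp [PiLp.inner_apply, RCLike.inner_apply, x, y, mul_comm]
  have hx : Real.sqrt ((Aᴴ * A).trace.re) = ‖x‖ := by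
    rw [EuclideanSpace.norm_eq, trace_conjTranspose_mul_self_re]
  have hy : Real.sqrt ((Bᴴ * B).trace.re) = ‖y‖ := by
    rw [EuclideanSpace.norm_eq, trace_conjTranspose_mul_self_re]
  rw [h1, hx, hy]
  exact norm_inner_le_norm x y

lemma exists_polar (M : Matrix (Fin d) (Fin d) ℂ) :
    ∃ W : Matrix (Fin d) (Fin d) ℂ,
      W * psqrt (Mᴴ * M) = M ∧
      (Wᴴ * W) * psqrt (Mᴴ * M) = psqrt (Mᴴ * M) ∧
      (Wᴴ * W) * (Wᴴ * W) = Wᴴ * W ∧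
      W * (Wᴴ * W) = W := by
  have hN : (Mᴴ * M).PosSemidef := posSemidef_conjTranspose_mul_self M
  have hH := hN.1
  set U : Matrix (Fin d) (Fin d) ℂ := (hH.eigenvectorUnitary : Matrix (Fin d) (Fin d) ℂ) with hU
  set lam : Fin d → ℝ := hH.eigenvalues with hlam
  have hlamnn : ∀ i, 0 ≤ lam i := fun i => hN.eigenvalues_nonneg i
  have u1 : star U * U = 1 := Unitary.coe_star_mul_self hH.eigenvectorUnitary
  have u2 : U * star U = 1 := Unitary.coe_mul_star_self hH.eigenvectorUnitary
  set Dm : (Fin d → ℂ) → Matrix (Fin d) (Fin d) ℂ :=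
    fun F => U * diagonal F * star U with hDm
  have hdiag : star U * (Mᴴ * M) * U = diagonal (Complex.ofReal ∘ lam) :=
    by have := hH.conjStarAlgAut_star_eigenvectorUnitary
       rw [Unitary.conjStarAlgAut_star_apply] at this; exact this
  have conj_mul : ∀ F G : Fin d → ℂ, Dm F * Dm G = Dm (fun i => F i * G i) := by
    intro F G
    simp only [hDm]
    calc (U * diagonal F * star U) * (U * diagonal G * star U)
        = U * diagonal F * (star U * U) * (diagonal G * star U) := by
          simp only [Matrix.mul_assoc]
      _ = U * (diagonal F * diagonal G) * star U := by
          rw [u1, Matrix.mul_one]; simp only [Matrix.mul_assoc]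
      _ = U * diagonal (fun i => F i * G i) * star U := by
          rw [Matrix.diagonal_mul_diagonal]
  have hconjT : ∀ F : Fin d → ℂ, (Dm F)ᴴ = Dm (fun i => star (F i)) := by
    intro F
    simp only [hDm, Matrix.conjTranspose_mul, Matrix.diagonal_conjTranspose,
      Matrix.star_eq_conjTranspose, Matrix.conjTranspose_conjTranspose]
    simp only [Matrix.mul_assoc]
    rfl
  have hNDm : Mᴴ * M = Dm (fun i => (lam i : ℂ)) := by
    have := hH.spectral_theorem; rw [Unitary.conjStarAlgAut_apply] at this; exact this
  have hSDm : psqrt (Mᴴ * M) = Dm (fun i => ((Real.sqrt (lam i) : ℝ) : ℂ)) := by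
    rw [psqrt, dif_pos hN]; rfl
  set g : ℝ → ℂ := fun t => if t = 0 then 0 else (↑(Real.sqrt t) : ℂ)⁻¹ with hg
  set ind : ℝ → ℂ := fun t => if t = 0 then 0 else 1 with hind
  -- columns of M * U with zero eigenvalue vanish
  have hcol : ∀ i : Fin d, lam i = 0 → ∀ j : Fin d, (M * U) j i = 0 := by
    intro i hi j
    have hdd : ((M * U)ᴴ * (M * U)) i i = 0 := by
      have : (M * U)ᴴ * (M * U) = star U * (Mᴴ * M) * U := by
        rw [Matrix.conjTranspose_mul]
        simp only [Matrix.mul_assoc, Matrix.star_eq_conjTranspose]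
      rw [this, hdiag, Matrix.diagonal_apply_eq, Function.comp_apply, hi, Complex.ofReal_zero]
    have hsum : ∑ k : Fin d, ‖(M * U) k i‖ ^ 2 = 0 := by
      rw [Matrix.mul_apply] at hdd
      have h2 := congrArg Complex.re hdd
      rw [Complex.zero_re, Complex.re_sum] at h2
      rw [← h2]
      congr 1; ext k
      rw [Matrix.conjTranspose_apply, RCLike.star_def, ← Complex.normSq_eq_conj_mul_self]
      simp [Complex.normSq_eq_norm_sq, ← Complex.ofReal_pow]
    have := (Finset.sum_eq_zero_iff_of_nonneg (fun k _ => by positivity)).mp hsum j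
      (Finset.mem_univ j)
    have hn : ‖(M * U) j i‖ = 0 := by nlinarith [norm_nonneg ((M * U) j i)]
    exact norm_eq_zero.mp hn
  have habsorb : ∀ F : Fin d → ℂ, (∀ i : Fin d, lam i ≠ 0 → F i = 1) →
      M * Dm F = M := by
    intro F hF
    have h1 : M * U * diagonal F = M * U := by
      ext j i
      rw [Matrix.mul_diagonal]
      by_cases hi : lam i = 0
      · simp [hcol i hi j]
      · rw [hF i hi, mul_one]
    calc M * Dm F = M * U * diagonal F * star U := by
          simp only [hDm, Matrix.mul_assoc]
      _ = M * U * star U := by rw [h1]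
      _ = M := by rw [Matrix.mul_assoc, u2, Matrix.mul_one]
  -- pointwise facts
  have p2 : ∀ t : ℝ, 0 ≤ t → star (g t) * (t : ℂ) * g t = ind t := by
    intro t ht
    by_cases h0 : t = 0
    · simp [hg, hind, h0]
    · have hpos : 0 < t := lt_of_le_of_ne ht (Ne.symm h0)
      have hs : Real.sqrt t ≠ 0 := ne_of_gt (Real.sqrt_pos.mpr hpos)
      simp only [hg, hind, if_neg h0]
      rw [Complex.star_def, map_inv₀, Complex.conj_ofReal]
      rw [← Complex.ofReal_inv, ← Complex.ofReal_mul, ← Complex.ofReal_mul, ← Complex.ofReal_one,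
        Complex.ofReal_inj]
      field_simp
      exact (Real.sq_sqrt ht).symm
  have p3 : ∀ t : ℝ, ind t * (Real.sqrt t : ℂ) = (Real.sqrt t : ℂ) := by
    intro t
    by_cases h0 : t = 0
    · simp [hind, h0]
    · simp [hind, h0]
  have p4 : ∀ t : ℝ, ind t * ind t = ind t := by
    intro t; by_cases h0 : t = 0 <;> simp [hind, h0]
  have p5 : ∀ t : ℝ, g t * ind t = g t := by
    intro t; by_cases h0 : t = 0 <;> simp [hg, hind, h0]
  set W : Matrix (Fin d) (Fin d) ℂ := M * Dm (fun i => g (lam i)) with hW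
  have hWh : Wᴴ = Dm (fun i => star (g (lam i))) * Mᴴ := by
    rw [hW, Matrix.conjTranspose_mul, hconjT]
  have hQ : Wᴴ * W = Dm (fun i => ind (lam i)) := by
    calc Wᴴ * W = Dm (fun i => star (g (lam i))) * (Mᴴ * M) * Dm (fun i => g (lam i)) := by
          rw [hWh, hW]; simp only [Matrix.mul_assoc]
      _ = Dm (fun i => star (g (lam i))) * Dm (fun i => (lam i : ℂ)) * Dm (fun i => g (lam i)) := by
          rw [hNDm]
      _ = Dm (fun i => star (g (lam i)) * (lam i : ℂ)) * Dm (fun i => g (lam i)) := by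
          rw [conj_mul]
      _ = Dm (fun i => star (g (lam i)) * (lam i : ℂ) * g (lam i)) := by rw [conj_mul]
      _ = Dm (fun i => ind (lam i)) := by
          have : (fun i => star (g (lam i)) * (lam i : ℂ) * g (lam i))
              = fun i => ind (lam i) := funext fun i => p2 (lam i) (hlamnn i)
          rw [this]
  refine ⟨W, ?_, ?_, ?_, ?_⟩
  · -- W * S = M
    rw [hSDm, hW, Matrix.mul_assoc, conj_mul]
    apply habsorb
    intro i hi
    have hpos : 0 < lam i := lt_of_le_of_ne (hlamnn i) (Ne.symm hi)
    have hs : Real.sqrt (lam i) ≠ 0 := ne_of_gt (Real.sqrt_pos.mpr hpos)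
    simp only [hg, if_neg hi]
    exact inv_mul_cancel₀ (Complex.ofReal_ne_zero.mpr hs)
  · -- Q * S = S
    rw [hQ, hSDm, conj_mul]
    have : (fun i => ind (lam i) * ((Real.sqrt (lam i) : ℝ) : ℂ))
        = fun i => ((Real.sqrt (lam i) : ℝ) : ℂ) := funext fun i => p3 (lam i)
    rw [this]
  · -- Q * Q = Q
    rw [hQ, conj_mul]
    have : (fun i => ind (lam i) * ind (lam i)) = fun i => ind (lam i) :=
      funext fun i => p4 (lam i)
    rw [this]
  · -- W * Q = W
    rw [hQ, hW, Matrix.mul_assoc, conj_mul]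
    have : (fun i => g (lam i) * ind (lam i)) = fun i => g (lam i) :=
      funext fun i => p5 (lam i)
    rw [this]

lemma re_trace_mul_le_traceNorm (M C : Matrix (Fin d) (Fin d) ℂ)
    (hC : (1 - C * Cᴴ).PosSemidef) : (C * M).trace.re ≤ traceNorm M := by
  obtain ⟨W, hWS, hQS, hQQ, hWQ⟩ := exists_polar M
  have hN : (Mᴴ * M).PosSemidef := posSemidef_conjTranspose_mul_self M
  set S : Matrix (Fin d) (Fin d) ℂ := psqrt (Mᴴ * M) with hSdef
  have hS_psd : S.PosSemidef := psqrt_posSemidef hN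
  set T : Matrix (Fin d) (Fin d) ℂ := psqrt S with hTdef
  have hT_psd : T.PosSemidef := psqrt_posSemidef hS_psd
  have hTT : T * T = S := psqrt_mul_self hS_psd
  have hTh : Tᴴ = T := psqrt_herm hS_psd
  have htrace_eq : (C * M).trace = ((Cᴴ * T)ᴴ * (W * T)).trace := by
    have h1 : C * M = (C * W * T) * T := by
      rw [← hWS, ← hTT]; simp only [Matrix.mul_assoc]
    have h2 : (Cᴴ * T)ᴴ * (W * T) = T * (C * W * T) := by
      rw [Matrix.conjTranspose_mul, hTh, Matrix.conjTranspose_conjTranspose]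
      simp only [Matrix.mul_assoc]
    rw [h1, h2, Matrix.trace_mul_comm]
  have hA : ((Cᴴ * T)ᴴ * (Cᴴ * T)).trace.re ≤ S.trace.re := by
    have hconj : (T * (1 - C * Cᴴ) * T).PosSemidef := by
      have := hC.mul_mul_conjTranspose_same T
      rwa [hTh] at this
    have hexp : T * (1 - C * Cᴴ) * T = S - (Cᴴ * T)ᴴ * (Cᴴ * T) := by
      rw [Matrix.conjTranspose_mul, hTh, Matrix.conjTranspose_conjTranspose]
      rw [Matrix.mul_sub, Matrix.sub_mul, Matrix.mul_one, hTT]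
      simp only [Matrix.mul_assoc]
    have h0 := trace_re_nonneg hconj
    rw [hexp, Matrix.trace_sub, Complex.sub_re] at h0
    linarith
  have hB : ((W * T)ᴴ * (W * T)).trace.re = S.trace.re := by
    have h1 : (W * T)ᴴ * (W * T) = (T * (Wᴴ * W)) * T := by
      rw [Matrix.conjTranspose_mul, hTh]; simp only [Matrix.mul_assoc]
    rw [h1, Matrix.trace_mul_comm, ← Matrix.mul_assoc, hTT, Matrix.trace_mul_comm, hQS]
  have hSnn : 0 ≤ S.trace.re := trace_re_nonneg hS_psd
  have hre : (C * M).trace.re ≤ ‖(C * M).trace‖ := Complex.re_le_norm _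
  have hcs := cauchy_schwarz_trace (Cᴴ * T) (W * T)
  rw [← htrace_eq] at hcs
  have : Real.sqrt (((Cᴴ * T)ᴴ * (Cᴴ * T)).trace.re) ≤ Real.sqrt S.trace.re :=
    Real.sqrt_le_sqrt hA
  have hfin : ‖(C * M).trace‖ ≤ S.trace.re := by
    calc ‖(C * M).trace‖ ≤ _ * _ := hcs
      _ ≤ Real.sqrt S.trace.re * Real.sqrt S.trace.re := by
        rw [hB]
        exact mul_le_mul_of_nonneg_right this (Real.sqrt_nonneg _)
      _ = S.trace.re := Real.mul_self_sqrt hSnn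
  have : traceNorm M = S.trace.re := rfl
  linarith

lemma one_sub_proj_idem {Q : Matrix (Fin d) (Fin d) ℂ} (hQQ : Q * Q = Q) :
    (1 - Q) * (1 - Q) = 1 - Q := by
  simp only [Matrix.mul_sub, Matrix.sub_mul, Matrix.mul_one, Matrix.one_mul, hQQ]
  abel

lemma one_sub_proj_posSemidef {Q : Matrix (Fin d) (Fin d) ℂ}
    (hQh : Qᴴ = Q) (hQQ : Q * Q = Q) : (1 - Q).PosSemidef := by
  have h1 : (1 - Q)ᴴ = 1 - Q := by rw [Matrix.conjTranspose_sub, Matrix.conjTranspose_one, hQh]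
  have := posSemidef_conjTranspose_mul_self (1 - Q)
  rwa [h1, one_sub_proj_idem hQQ] at this

lemma traceNorm_add_le (A B : Matrix (Fin d) (Fin d) ℂ) :
    traceNorm (A + B) ≤ traceNorm A + traceNorm B := by
  obtain ⟨W, hWS, hQS, hQQ, hWQ⟩ := exists_polar (A + B)
  have hQh : (Wᴴ * W)ᴴ = Wᴴ * W := by
    rw [Matrix.conjTranspose_mul, Matrix.conjTranspose_conjTranspose]
  have hWAB : Wᴴ * (A + B) = psqrt ((A + B)ᴴ * (A + B)) := by
    conv_lhs => rw [← hWS]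
    rw [← Matrix.mul_assoc, hQS]
  have heq : traceNorm (A + B) = (Wᴴ * (A + B)).trace.re := by rw [hWAB]; rfl
  have hsplit : (Wᴴ * (A + B)).trace.re = (Wᴴ * A).trace.re + (Wᴴ * B).trace.re := by
    rw [Matrix.mul_add, Matrix.trace_add, Complex.add_re]
  have hcontr : (1 - Wᴴ * (Wᴴ)ᴴ).PosSemidef := by
    rw [Matrix.conjTranspose_conjTranspose]
    exact one_sub_proj_posSemidef hQh hQQ
  have h1 := re_trace_mul_le_traceNorm A Wᴴ hcontr
  have h2 := re_trace_mul_le_traceNorm B Wᴴ hcontr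
  rw [heq, hsplit]
  linarith

lemma traceNorm_mul_le (X Y : Matrix (Fin d) (Fin d) ℂ) :
    traceNorm (X * Y)
      ≤ Real.sqrt ((Xᴴ * X).trace.re) * Real.sqrt ((Yᴴ * Y).trace.re) := by
  obtain ⟨W, hWS, hQS, hQQ, hWQ⟩ := exists_polar (X * Y)
  have hWXY : Wᴴ * (X * Y) = psqrt ((X * Y)ᴴ * (X * Y)) := by
    conv_lhs => rw [← hWS]
    rw [← Matrix.mul_assoc, hQS]
  have heq : traceNorm (X * Y) = ((Xᴴ * W)ᴴ * Y).trace.re := by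
    have h2 : (Xᴴ * W)ᴴ * Y = Wᴴ * (X * Y) := by
      rw [Matrix.conjTranspose_mul, Matrix.conjTranspose_conjTranspose]
      simp only [Matrix.mul_assoc]
    rw [h2, hWXY]; rfl
  have hE : (W * Wᴴ) * (W * Wᴴ) = W * Wᴴ := by
    calc (W * Wᴴ) * (W * Wᴴ) = (W * (Wᴴ * W)) * Wᴴ := by simp only [Matrix.mul_assoc]
      _ = W * Wᴴ := by rw [hWQ]
  have hEh : (W * Wᴴ)ᴴ = W * Wᴴ := by
    rw [Matrix.conjTranspose_mul, Matrix.conjTranspose_conjTranspose]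
  have hXW : ((Xᴴ * W)ᴴ * (Xᴴ * W)).trace.re ≤ (Xᴴ * X).trace.re := by
    have h4 : ((Xᴴ * W)ᴴ * (Xᴴ * W)).trace = ((X * Xᴴ) * (W * Wᴴ)).trace := by
      have h3 : (Xᴴ * W)ᴴ * (Xᴴ * W) = Wᴴ * ((X * Xᴴ) * W) := by
        rw [Matrix.conjTranspose_mul, Matrix.conjTranspose_conjTranspose]
        simp only [Matrix.mul_assoc]
      rw [h3, Matrix.trace_mul_comm, ← Matrix.mul_assoc]
    have hFF := one_sub_proj_idem hE
    have h6 : ((1 - W * Wᴴ) * (X * Xᴴ) * (1 - W * Wᴴ)).PosSemidef := by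
      have := (posSemidef_self_mul_conjTranspose X).mul_mul_conjTranspose_same (1 - W * Wᴴ)
      rwa [Matrix.conjTranspose_sub, Matrix.conjTranspose_one, hEh] at this
    have h7 : ((1 - W * Wᴴ) * (X * Xᴴ) * (1 - W * Wᴴ)).trace
        = ((X * Xᴴ) * (1 - W * Wᴴ)).trace := by
      calc ((1 - W * Wᴴ) * (X * Xᴴ) * (1 - W * Wᴴ)).trace
          = ((1 - W * Wᴴ) * ((1 - W * Wᴴ) * (X * Xᴴ))).trace := Matrix.trace_mul_comm _ _
        _ = (((1 - W * Wᴴ) * (1 - W * Wᴴ)) * (X * Xᴴ)).trace := by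
            simp only [Matrix.mul_assoc]
        _ = ((1 - W * Wᴴ) * (X * Xᴴ)).trace := by rw [hFF]
        _ = ((X * Xᴴ) * (1 - W * Wᴴ)).trace := Matrix.trace_mul_comm _ _
    have h8 : 0 ≤ ((X * Xᴴ) * (1 - W * Wᴴ)).trace.re := by
      rw [← h7]; exact trace_re_nonneg h6
    have h9 : ((X * Xᴴ) * (1 - W * Wᴴ)).trace
        = (X * Xᴴ).trace - ((X * Xᴴ) * (W * Wᴴ)).trace := by
      rw [Matrix.mul_sub, Matrix.mul_one, Matrix.trace_sub]
    rw [h9, Complex.sub_re] at h8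
    have h10 : (X * Xᴴ).trace = (Xᴴ * X).trace := Matrix.trace_mul_comm _ _
    rw [h4]
    rw [h10] at h8
    linarith
  have hre : ((Xᴴ * W)ᴴ * Y).trace.re ≤ ‖((Xᴴ * W)ᴴ * Y).trace‖ := Complex.re_le_norm _
  have hcs := cauchy_schwarz_trace (Xᴴ * W) Y
  have hmono : Real.sqrt (((Xᴴ * W)ᴴ * (Xᴴ * W)).trace.re)
      ≤ Real.sqrt ((Xᴴ * X).trace.re) := Real.sqrt_le_sqrt hXW
  rw [heq]
  calc ((Xᴴ * W)ᴴ * Y).trace.re ≤ ‖((Xᴴ * W)ᴴ * Y).trace‖ := hre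
    _ ≤ Real.sqrt (((Xᴴ * W)ᴴ * (Xᴴ * W)).trace.re)
        * Real.sqrt ((Yᴴ * Y).trace.re) := hcs
    _ ≤ Real.sqrt ((Xᴴ * X).trace.re) * Real.sqrt ((Yᴴ * Y).trace.re) :=
        mul_le_mul_of_nonneg_right hmono (Real.sqrt_nonneg _)

lemma psqrt_commute {ρ P : Matrix (Fin d) (Fin d) ℂ} (hρ : ρ.PosSemidef)
    (hPherm : Pᴴ = P) (hPproj : P * P = P) (hPρ : P * ρ = ρ * P) :
    P * psqrt ρ = psqrt ρ * P := by
  set V : Matrix (Fin d) (Fin d) ℂ := 1 - P - P with hVdef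
  set S : Matrix (Fin d) (Fin d) ℂ := psqrt ρ with hSdef
  have hS_psd : S.PosSemidef := psqrt_posSemidef hρ
  have hSS : S * S = ρ := psqrt_mul_self hρ
  have hVh : Vᴴ = V := by
    rw [hVdef, Matrix.conjTranspose_sub, Matrix.conjTranspose_sub, Matrix.conjTranspose_one,
      hPherm]
  have hVρ : V * ρ = ρ * V := by
    rw [hVdef]
    simp only [Matrix.sub_mul, Matrix.mul_sub, Matrix.one_mul, Matrix.mul_one, hPρ]
  have hVV : V * V = 1 := by
    rw [hVdef]
    simp only [Matrix.mul_sub, Matrix.sub_mul, Matrix.mul_one, Matrix.one_mul, hPproj]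
    abel
  have hVSV_psd : (V * S * V).PosSemidef := by
    have := hS_psd.mul_mul_conjTranspose_same V
    rwa [hVh] at this
  have hsq : (V * S * V) ^ 2 = S ^ 2 := by
    calc (V * S * V) ^ 2 = V * S * (V * V) * S * V := by
          rw [pow_two]; simp only [Matrix.mul_assoc]
      _ = V * (S * S) * V := by rw [hVV, Matrix.mul_one]; simp only [Matrix.mul_assoc]
      _ = V * ρ * V := by rw [hSS]
      _ = ρ * (V * V) := by rw [hVρ, Matrix.mul_assoc]
      _ = ρ := by rw [hVV, Matrix.mul_one]
      _ = S ^ 2 := by rw [pow_two, hSS]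
  have heqV : V * S * V = S := by
    rw [← CFC.sqrt_sq (V * S * V) hVSV_psd.nonneg, hsq, CFC.sqrt_sq S hS_psd.nonneg]
  have hVS : V * S = S * V := by
    have h := congrArg (fun X => X * V) heqV
    calc V * S = V * S * (V * V) := by rw [hVV, Matrix.mul_one]
      _ = (V * S * V) * V := by simp only [Matrix.mul_assoc]
      _ = S * V := by rw [heqV]
  have h1 : (P + P) * S = S * (P + P) := by
    have hP2 : P + P = 1 - V := by rw [hVdef]; abel
    rw [hP2, Matrix.sub_mul, Matrix.mul_sub, Matrix.one_mul, Matrix.mul_one, hVS]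
  have h2 : (2 : ℂ) • (P * S) = (2 : ℂ) • (S * P) := by
    rw [two_smul, two_smul]
    simpa [Matrix.add_mul, Matrix.mul_add] using h1
  exact smul_right_injective _ (two_ne_zero) h2

lemma psqrt_proj_conj {ρ P : Matrix (Fin d) (Fin d) ℂ} (hρ : ρ.PosSemidef)
    (hPherm : Pᴴ = P) (hPproj : P * P = P) (hPρ : P * ρ = ρ * P) :
    psqrt (P * ρ * P) = P * psqrt ρ := by
  have hPS := psqrt_commute hρ hPherm hPproj hPρ
  set S : Matrix (Fin d) (Fin d) ℂ := psqrt ρ with hSdef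
  have hSS : S * S = ρ := psqrt_mul_self hρ
  have hPρP_psd : (P * ρ * P).PosSemidef := by
    have := hρ.mul_mul_conjTranspose_same P
    rwa [hPherm] at this
  have hX_psd : (P * S * P).PosSemidef := by
    have := (psqrt_posSemidef hρ).mul_mul_conjTranspose_same P
    rwa [hPherm] at this
  have hXeq : P * S * P = P * S := by
    rw [hPS, Matrix.mul_assoc, hPproj, ← hPS]
  have hPρP' : P * ρ * P = P * ρ := by
    rw [hPρ, Matrix.mul_assoc, hPproj, ← hPρ]
  have hX2 : (P * S * P) ^ 2 = P * ρ * P := by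
    rw [pow_two, hXeq]
    calc (P * S) * (P * S) = (P * S * P) * S := by simp only [Matrix.mul_assoc]
      _ = (P * S) * S := by rw [hXeq]
      _ = P * (S * S) := by rw [Matrix.mul_assoc]
      _ = P * ρ := by rw [hSS]
      _ = P * ρ * P := hPρP'.symm
  have : P * S * P = CFC.sqrt (P * ρ * P) := by
    rw [← hX2, CFC.sqrt_sq _ hX_psd.nonneg]
  rw [psqrt_eq hPρP_psd, ← this, hXeq]

theorem hard_truncation_bound {d : ℕ} (ρ σ P : Matrix (Fin d) (Fin d) ℂ)
    (hρ : ρ.PosSemidef) (hσ : σ.PosSemidef)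
    (hPherm : Pᴴ = P) (hPproj : P * P = P) (hPρ : P * ρ = ρ * P) :
    traceNorm (psqrt ρ * psqrt σ) ≤ traceNorm (psqrt (P * ρ * P) * psqrt σ)
      + Real.sqrt (((1 - P) * ρ * (1 - P)).trace.re)
        * Real.sqrt (((1 - P) * σ * (1 - P)).trace.re) := by
  set Sρ : Matrix (Fin d) (Fin d) ℂ := psqrt ρ with hSρdef
  set Sσ : Matrix (Fin d) (Fin d) ℂ := psqrt σ with hSσdef
  have hSρh : Sρᴴ = Sρ := psqrt_herm hρ
  have hSσh : Sσᴴ = Sσ := psqrt_herm hσ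
  have hSρρ : Sρ * Sρ = ρ := psqrt_mul_self hρ
  have hSσσ : Sσ * Sσ = σ := psqrt_mul_self hσ
  have hPS : P * Sρ = Sρ * P := psqrt_commute hρ hPherm hPproj hPρ
  have hPsq : psqrt (P * ρ * P) = P * Sρ := psqrt_proj_conj hρ hPherm hPproj hPρ
  have h1p : (1 - P) * (1 - P) = 1 - P := one_sub_proj_idem hPproj
  have h1ph : (1 - P)ᴴ = 1 - P := by
    rw [Matrix.conjTranspose_sub, Matrix.conjTranspose_one, hPherm]
  have hcomm1 : Sρ * (1 - P) = (1 - P) * Sρ := by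
    simp only [Matrix.mul_sub, Matrix.sub_mul, Matrix.mul_one, Matrix.one_mul, hPS]
  -- decomposition
  have hsecond : Sρ * (1 - P) * ((1 - P) * Sσ) = (1 - P) * Sρ * Sσ := by
    calc Sρ * (1 - P) * ((1 - P) * Sσ)
        = Sρ * ((1 - P) * (1 - P)) * Sσ := by simp only [Matrix.mul_assoc]
      _ = Sρ * (1 - P) * Sσ := by rw [h1p]
      _ = (1 - P) * Sρ * Sσ := by rw [hcomm1]
  have hdec : Sρ * Sσ = psqrt (P * ρ * P) * Sσ + Sρ * (1 - P) * ((1 - P) * Sσ) := by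
    rw [hPsq, hsecond]
    simp only [Matrix.sub_mul, Matrix.one_mul]
    abel
  have htri : traceNorm (Sρ * Sσ) ≤ traceNorm (psqrt (P * ρ * P) * Sσ)
      + traceNorm (Sρ * (1 - P) * ((1 - P) * Sσ)) := by
    rw [hdec]
    exact traceNorm_add_le _ _
  have hhold := traceNorm_mul_le (Sρ * (1 - P)) ((1 - P) * Sσ)
  have hrad1 : (Sρ * (1 - P))ᴴ * (Sρ * (1 - P)) = (1 - P) * ρ * (1 - P) := by
    rw [Matrix.conjTranspose_mul, h1ph, hSρh]
    calc (1 - P) * Sρ * (Sρ * (1 - P)) = (1 - P) * (Sρ * Sρ) * (1 - P) := by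
          simp only [Matrix.mul_assoc]
      _ = (1 - P) * ρ * (1 - P) := by rw [hSρρ]
  have hrad2 : (((1 - P) * Sσ)ᴴ * ((1 - P) * Sσ)).trace
      = ((1 - P) * σ * (1 - P)).trace := by
    rw [Matrix.conjTranspose_mul, h1ph, hSσh]
    calc (Sσ * (1 - P) * ((1 - P) * Sσ)).trace
        = (Sσ * (1 - P) * Sσ).trace := by
          rw [show Sσ * (1 - P) * ((1 - P) * Sσ) = Sσ * ((1 - P) * (1 - P)) * Sσ by
            simp only [Matrix.mul_assoc], h1p]
      _ = ((1 - P) * Sσ * Sσ).trace := by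
          rw [show Sσ * (1 - P) * Sσ = Sσ * ((1 - P) * Sσ) from by simp only [Matrix.mul_assoc],
            Matrix.trace_mul_comm]
      _ = ((1 - P) * σ).trace := by rw [Matrix.mul_assoc, hSσσ]
      _ = ((1 - P) * σ * (1 - P)).trace := by
          rw [Matrix.trace_mul_comm ((1 - P) * σ) (1 - P), ← Matrix.mul_assoc, h1p]
  rw [hrad1, hrad2] at hhold
  linarith
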